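/- For any partition μ, with z_i(μ) = t^{-l(μ)+i} q^{μ_i}, the following identity of rational functions in q, t, u holds: ∏_{1≤i<j≤l(μ)} (1 - t u z_i(μ)/z_j(μ))/(1 - u z_i(μ)/z_j(μ)) = ∏_{□∈μ} (1 - u q^{a_μ(□)+1} t^{-l_μ(□)})/(1 - u q^{a_μ(□)} t^{-l_μ(□)}) · ∏_{i=1}^{l(μ)} (1-u)/(1 - u z_i(μ)). -/

import Mathlib

open Finset

/-- A partition: weakly decreasing sequence of naturals, with `len` nonzero parts
(0-based indexing: `part 0 = μ₁`). -/
structure YDPartition where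
  part : ℕ → ℕ
  len : ℕ
  antitone : ∀ ⦃i j : ℕ⦄, i ≤ j → part j ≤ part i
  pos_iff : ∀ i, i < len ↔ 0 < part i

/-- Height of the (0-based) column `c` of the Young diagram. -/
def colHeight (p : ℕ → ℕ) (l c : ℕ) : ℕ :=
  ((Finset.range l).filter (fun r => c < p r)).card

/-- Arm length of the cell in (0-based) row `r`, column `c`. -/
def armZ (p : ℕ → ℕ) (r c : ℕ) : ℤ := (p r : ℤ) - 1 - c

/-- Leg length of the cell in (0-based) row `r`, column `c`. -/
def legZ (p : ℕ → ℕ) (l r c : ℕ) : ℤ :=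
  (colHeight p l c : ℤ) - 1 - r

/-- The field of rational functions `ℚ(q, t, u)`. -/
noncomputable abbrev K3 : Type := FractionRing (MvPolynomial (Fin 3) ℚ)

noncomputable def qv : K3 := algebraMap (MvPolynomial (Fin 3) ℚ) K3 (MvPolynomial.X 0)
noncomputable def tv : K3 := algebraMap (MvPolynomial (Fin 3) ℚ) K3 (MvPolynomial.X 1)
noncomputable def uv : K3 := algebraMap (MvPolynomial (Fin 3) ℚ) K3 (MvPolynomial.X 2)

/-- with `z_i(μ) = t^{-l(μ)+i} q^{μ_i}` (1-based `i`; 0-based below),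
in `ℚ(q,t,u)`:
`∏_{i<j} (1 - tu·z_i/z_j)/(1 - u·z_i/z_j)
 = ∏_{□∈μ} (1 - u q^{a(□)+1} t^{-l(□)})/(1 - u q^{a(□)} t^{-l(□)})
   · ∏_i (1-u)/(1 - u z_i(μ))`. -/
lemma qv_ne : qv ≠ 0 := by
  simp [qv, map_ne_zero_iff _ (IsFractionRing.injective (MvPolynomial (Fin 3) ℚ) K3),
    MvPolynomial.X_ne_zero]

lemma tv_ne : tv ≠ 0 := by
  simp [tv, map_ne_zero_iff _ (IsFractionRing.injective (MvPolynomial (Fin 3) ℚ) K3),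
    MvPolynomial.X_ne_zero]

lemma one_sub_ne (a b : ℤ) : (1:K3) - uv * qv ^ a * tv ^ b ≠ 0 := by
  intro h
  have h1 : uv * qv ^ a * tv ^ b = 1 := by linear_combination -h
  have hq := qv_ne; have ht := tv_ne
  rw [show a = (a.toNat : ℤ) - ((-a).toNat : ℤ) from (Int.toNat_sub_toNat_neg a).symm,
      show b = (b.toNat : ℤ) - ((-b).toNat : ℤ) from (Int.toNat_sub_toNat_neg b).symm,
      zpow_sub₀ hq, zpow_sub₀ ht] at h1
  rw [zpow_natCast, zpow_natCast, zpow_natCast, zpow_natCast] at h1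
  have h2 : uv * qv ^ a.toNat * tv ^ b.toNat = qv ^ (-a).toNat * tv ^ (-b).toNat := by
    field_simp at h1
    linear_combination h1
  set φ := algebraMap (MvPolynomial (Fin 3) ℚ) K3
  have h3 : φ (MvPolynomial.X 2 * MvPolynomial.X 0 ^ a.toNat * MvPolynomial.X 1 ^ b.toNat)
      = φ (MvPolynomial.X 0 ^ (-a).toNat * MvPolynomial.X 1 ^ (-b).toNat) := by
    simpa [map_mul, map_pow, qv, tv, uv, φ] using h2
  have h4 := IsFractionRing.injective (MvPolynomial (Fin 3) ℚ) K3 h3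
  have h5 := congrArg (MvPolynomial.eval (fun i => if i = 2 then (0:ℚ) else 1)) h4
  simp [MvPolynomial.eval_mul, MvPolynomial.eval_pow] at h5

lemma one_sub_u_ne : (1:K3) - uv ≠ 0 := by simpa using one_sub_ne 0 0

lemma telescope {K : Type*} [Field K] (f : ℕ → K) (hf : ∀ c, f c ≠ 0) {a b : ℕ} (h : a ≤ b) :
    ∏ c ∈ Ico a b, f c / f (c+1) = f a / f b := by
  induction b, h using Nat.le_induction with
  | base => simp [div_self (hf a)]
  | succ b hab ih =>
      rw [prod_Ico_succ_top hab, ih, div_mul_div_comm]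
      rw [mul_comm (f a) (f b), mul_div_mul_left _ _ (hf b)]

section Rows

variable {p : ℕ → ℕ} {l : ℕ}

lemma colH_le (c : ℕ) : colHeight p l c ≤ l := by
  simpa [colHeight] using (card_le_card (filter_subset _ (range l))).trans_eq (card_range l)

variable (hp : ∀ ⦃i j : ℕ⦄, i ≤ j → p j ≤ p i)
include hp

lemma lt_colH {c k : ℕ} (hk : k < l) (hc : c < p k) : k < colHeight p l c := by
  have : range (k+1) ⊆ (range l).filter (fun r => c < p r) := by
    intro i hi
    simp only [mem_range] at hi
    simp only [mem_filter, mem_range]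
    exact ⟨lt_of_lt_of_le hi hk, lt_of_lt_of_le hc (hp (Nat.lt_succ_iff.mp hi))⟩
  have h := card_le_card this
  rw [card_range] at h
  exact h

lemma colH_le_of {c k : ℕ} (hc : p k ≤ c) : colHeight p l c ≤ k := by
  have : (range l).filter (fun r => c < p r) ⊆ range k := by
    intro i hi
    simp only [mem_filter, mem_range] at hi
    simp only [mem_range]
    by_contra hik
    exact absurd (lt_of_le_of_lt hc hi.2) (not_lt.mpr (hp (not_lt.mp hik)))
  simpa [colHeight] using (card_le_card this).trans_eq (card_range k)

lemma colH_eq_iff (hl0 : p l = 0) {c k : ℕ} (hk1 : 1 ≤ k) (hkl : k ≤ l) :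
    colHeight p l c = k ↔ p k ≤ c ∧ c < p (k-1) := by
  constructor
  · intro h
    constructor
    · by_contra hc
      push_neg at hc
      rcases lt_or_eq_of_le hkl with hkl' | rfl
      · exact absurd (lt_colH hp hkl' hc) (by omega)
      · omega
    · by_contra hc
      push_neg at hc
      have := colH_le_of (l := l) hp (c := c) (k := k-1) hc
      omega
  · rintro ⟨h1, h2⟩
    have hk1l : k - 1 < l := by omega
    have := lt_colH hp hk1l h2
    have := colH_le_of (l := l) hp h1
    omega

/-- numerator block factor -/
noncomputable def Nnd (p : ℕ → ℕ) (r k : ℕ) : K3 :=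
  1 - uv * qv ^ ((p r : ℤ) - p k) * tv ^ ((r : ℤ) + 1 - k)

/-- denominator block factor -/
noncomputable def Dnd (p : ℕ → ℕ) (r k : ℕ) : K3 :=
  1 - uv * qv ^ ((p r : ℤ) - p (k-1)) * tv ^ ((r : ℤ) + 1 - k)

omit hp in
lemma Nnd_ne (r k : ℕ) : Nnd p r k ≠ 0 := one_sub_ne _ _
omit hp in
lemma Dnd_ne (r k : ℕ) : Dnd p r k ≠ 0 := one_sub_ne _ _

lemma row_cell (hl0 : p l = 0) {r : ℕ} (hr : r < l) :
    ∏ c ∈ range (p r),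
        (1 - uv * qv ^ (armZ p r c + 1) * tv ^ (-(legZ p l r c))) /
          (1 - uv * qv ^ (armZ p r c) * tv ^ (-(legZ p l r c)))
      = ∏ k ∈ Ico (r+1) (l+1), Nnd p r k / Dnd p r k := by
  have hmaps : ∀ c ∈ range (p r), colHeight p l c ∈ Ico (r+1) (l+1) := by
    intro c hc
    rw [mem_range] at hc
    exact mem_Ico.mpr ⟨lt_colH hp hr hc, Nat.lt_succ_of_le (colH_le c)⟩
  rw [← prod_fiberwise_of_maps_to hmaps]
  refine prod_congr rfl (fun k hk => ?_)
  obtain ⟨hk1, hk2⟩ := mem_Ico.mp hk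
  have hfib : filter (fun c => colHeight p l c = k) (range (p r)) = Ico (p k) (p (k-1)) := by
    ext c
    simp only [mem_filter, mem_range, mem_Ico]
    rw [colH_eq_iff hp hl0 (by omega) (by omega)]
    constructor
    · rintro ⟨_, h⟩; exact h
    · rintro ⟨h1, h2⟩
      exact ⟨lt_of_lt_of_le h2 (hp (by omega : r ≤ k-1)), h1, h2⟩
  rw [hfib]
  calc ∏ c ∈ Ico (p k) (p (k-1)),
        (1 - uv * qv ^ (armZ p r c + 1) * tv ^ (-(legZ p l r c))) /
          (1 - uv * qv ^ (armZ p r c) * tv ^ (-(legZ p l r c)))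
      = ∏ c ∈ Ico (p k) (p (k-1)),
          (fun c : ℕ => 1 - uv * qv ^ ((p r : ℤ) - (c:ℤ)) * tv ^ ((r : ℤ) + 1 - k)) c /
          (fun c : ℕ => 1 - uv * qv ^ ((p r : ℤ) - (c:ℤ)) * tv ^ ((r : ℤ) + 1 - k)) (c+1) := by
        refine prod_congr rfl (fun c hc => ?_)
        obtain ⟨hc1, hc2⟩ := mem_Ico.mp hc
        have hH : colHeight p l c = k := (colH_eq_iff hp hl0 (by omega) (by omega)).mpr ⟨hc1, hc2⟩
        have hleg : -(legZ p l r c) = (r : ℤ) + 1 - k := by rw [legZ, hH]; ring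
        have ha1 : armZ p r c + 1 = (p r : ℤ) - c := by rw [armZ]; ring
        have ha2 : armZ p r c = (p r : ℤ) - (↑(c+1) : ℤ) := by rw [armZ]; push_cast; ring
        rw [hleg, ha1, ha2]
    _ = _ := by
        rw [telescope _ (fun c => one_sub_ne _ _) (hp (Nat.sub_le k 1))]
        rfl

omit hp in
lemma key (X : K3) (u1 A B : K3) (hX : X ≠ 0) (hu : u1 ≠ 0) :
    (A * X) / (u1 * B) * (u1 / X) = A / B := by
  rw [show (A * X) / (u1 * B) * (u1 / X) = A / B * (X / X) * (u1 / u1) by ring,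
    div_self hX, div_self hu, mul_one, mul_one]

omit hp in
lemma row_shuffle (hl0 : p l = 0) {r : ℕ} (hr : r < l) :
    (∏ k ∈ Ico (r+1) (l+1), Nnd p r k / Dnd p r k) *
        ((1 - uv) / (1 - uv * (tv ^ ((r : ℤ) + 1 - l) * qv ^ (p r : ℤ))))
      = ∏ j ∈ Ico (r+1) l, Nnd p r j / Dnd p r (j+1) := by
  have hNl : Nnd p r l = 1 - uv * (tv ^ ((r : ℤ) + 1 - l) * qv ^ (p r : ℤ)) := by
    rw [Nnd, hl0]; push_cast; ring_nf
  have hDr : Dnd p r (r+1) = 1 - uv := by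
    rw [Dnd]
    simp
  have hshift : ∏ j ∈ Ico (r+1) l, Dnd p r (j+1) = ∏ k ∈ Ico (r+2) (l+1), Dnd p r k := by
    rw [prod_Ico_eq_prod_range, prod_Ico_eq_prod_range,
      show l + 1 - (r+2) = l - (r+1) by omega]
    exact prod_congr rfl (fun i _ => by congr 1; omega)
  rw [prod_div_distrib, prod_div_distrib, hshift,
    prod_Ico_succ_top (by omega : r+1 ≤ l),
    prod_eq_prod_Ico_succ_bot (by omega : r+1 < l+1) (fun k => Dnd p r k),
    hNl, hDr]
  have hX : (1 - uv * (tv ^ ((r : ℤ) + 1 - l) * qv ^ (p r : ℤ))) ≠ 0 := by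
    rw [show (1:K3) - uv * (tv ^ ((r : ℤ) + 1 - l) * qv ^ (p r : ℤ))
        = 1 - uv * qv ^ (p r : ℤ) * tv ^ ((r : ℤ) + 1 - l) by ring]
    exact one_sub_ne _ _
  have hB : (∏ k ∈ Ico (r+2) (l+1), Dnd p r k) ≠ 0 :=
    prod_ne_zero_iff.mpr (fun k _ => Dnd_ne r k)
  rw [key _ _ _ _ hX one_sub_u_ne]
end Rows

theorem product_arms_legs (μ : YDPartition) :
    (∏ j ∈ range μ.len, ∏ i ∈ range j,
        (1 - tv * uv * ((tv ^ ((i : ℤ) + 1 - μ.len) * qv ^ (μ.part i : ℤ)) /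
            (tv ^ ((j : ℤ) + 1 - μ.len) * qv ^ (μ.part j : ℤ)))) /
          (1 - uv * ((tv ^ ((i : ℤ) + 1 - μ.len) * qv ^ (μ.part i : ℤ)) /
            (tv ^ ((j : ℤ) + 1 - μ.len) * qv ^ (μ.part j : ℤ))))) =
      (∏ r ∈ range μ.len, ∏ c ∈ range (μ.part r),
          (1 - uv * qv ^ (armZ μ.part r c + 1) * tv ^ (-(legZ μ.part μ.len r c))) /
            (1 - uv * qv ^ (armZ μ.part r c) * tv ^ (-(legZ μ.part μ.len r c)))) *
        ∏ i ∈ range μ.len,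
          (1 - uv) / (1 - uv * (tv ^ ((i : ℤ) + 1 - μ.len) * qv ^ (μ.part i : ℤ))) := by
  obtain ⟨p, l, hp, hpos⟩ := μ
  dsimp only
  have hl0 : p l = 0 := by have h := hpos l; omega
  have hpair : ∀ i j : ℕ,
      (1 - tv * uv * ((tv ^ ((i : ℤ) + 1 - l) * qv ^ (p i : ℤ)) /
          (tv ^ ((j : ℤ) + 1 - l) * qv ^ (p j : ℤ)))) /
        (1 - uv * ((tv ^ ((i : ℤ) + 1 - l) * qv ^ (p i : ℤ)) /
          (tv ^ ((j : ℤ) + 1 - l) * qv ^ (p j : ℤ))))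
      = Nnd p i j / Dnd p i (j+1) := by
    intro i j
    have hzz : (tv ^ ((i : ℤ) + 1 - l) * qv ^ (p i : ℤ)) /
        (tv ^ ((j : ℤ) + 1 - l) * qv ^ (p j : ℤ))
        = qv ^ ((p i : ℤ) - (p j : ℤ)) * tv ^ ((i : ℤ) - j) := by
      calc (tv ^ ((i : ℤ) + 1 - l) * qv ^ (p i : ℤ)) /
          (tv ^ ((j : ℤ) + 1 - l) * qv ^ (p j : ℤ))
          = (tv ^ ((i : ℤ) + 1 - l) / tv ^ ((j : ℤ) + 1 - l)) *
            (qv ^ (p i : ℤ) / qv ^ (p j : ℤ)) := (div_mul_div_comm _ _ _ _).symm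
        _ = tv ^ (((i : ℤ) + 1 - l) - ((j : ℤ) + 1 - l)) *
            qv ^ ((p i : ℤ) - (p j : ℤ)) := by
              rw [← zpow_sub₀ tv_ne, ← zpow_sub₀ qv_ne]
        _ = qv ^ ((p i : ℤ) - (p j : ℤ)) * tv ^ ((i : ℤ) - j) := by
              rw [show ((i : ℤ) + 1 - l) - ((j : ℤ) + 1 - l) = (i : ℤ) - j by ring]
              ring
    rw [hzz, Nnd, Dnd]
    congr 1
    · rw [show (i : ℤ) + 1 - (j:ℤ) = ((i:ℤ) - j) + 1 by ring, zpow_add_one₀ tv_ne]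
      ring
    · push_cast
      rw [show (i : ℤ) + 1 - ((j:ℤ)+1) = (i:ℤ) - j by ring]
      ring
  simp only [hpair]
  rw [prod_comm' (t' := range l) (s' := fun i => Ico (i+1) l)
    (by intro x y; simp only [mem_range, mem_Ico]; omega)]
  rw [← prod_mul_distrib]
  refine prod_congr rfl (fun r hr => ?_)
  rw [← row_shuffle hl0 (mem_range.mp hr), row_cell hp hl0 (mem_range.mp hr)]
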